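/- With the notation of the context, and assuming in addition that A is a left weak H-module algebra via ρ, the pair (A, j_ν) is the equalizer of δ_E and (id_E⊗Π^L)∘δ_E: the map j_ν is injective, δ_E∘j_ν = (id_E⊗Π^L)∘δ_E∘j_ν, and for every k-vector space X and every k-linear map g : X → E with δ_E∘g = (id_E⊗Π^L)∘δ_E∘g there exists a unique k-linear map g' : X → A with j_ν∘g' = g. -/

import Mathlib

/-!
Common framework: weak bialgebras, weak Hopf algebras, weak measures and
unitary weak crossed products, formalized via linear maps over a field `k`.
Sweedler sums are expressed by composites of canonical linear maps.
-/

open TensorProduct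

set_option autoImplicit false
set_option maxHeartbeats 1000000

noncomputable section

namespace WeakCrossed

variable (k : Type*) [Field k]
variable (H : Type*) [Ring H] [Algebra k H] [Coalgebra k H]
variable (A : Type*) [Ring A] [Algebra k A]

/-- The comultiplication of `H`. -/
abbrev comulH : H →ₗ[k] H ⊗[k] H := Coalgebra.comul

/-- The counit of `H`. -/
abbrev counitH : H →ₗ[k] k := Coalgebra.counit

/-- The rearrangement `(M ⊗ N) ⊗ P ≃ (M ⊗ P) ⊗ N`. -/
def rightComm (M N P : Type*) [AddCommGroup M] [AddCommGroup N] [AddCommGroup P]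
    [Module k M] [Module k N] [Module k P] :
    (M ⊗[k] N) ⊗[k] P ≃ₗ[k] (M ⊗[k] P) ⊗[k] N :=
  TensorProduct.assoc k M N P ≪≫ₗ
    TensorProduct.congr (LinearEquiv.refl k M) (TensorProduct.comm k N P) ≪≫ₗ
      (TensorProduct.assoc k M P N).symm

/-- The comultiplication of the tensor product coalgebra `H ⊗ H`:
`h ⊗ g ↦ Σ (h₍₁₎ ⊗ g₍₁₎) ⊗ (h₍₂₎ ⊗ g₍₂₎)`. -/
def comul2 : H ⊗[k] H →ₗ[k] (H ⊗[k] H) ⊗[k] (H ⊗[k] H) :=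
  (TensorProduct.tensorTensorTensorComm k H H H H).toLinearMap ∘ₗ
    TensorProduct.map (comulH k H) (comulH k H)

/-- Iterated comultiplication `h ↦ Σ (h₍₁₎ ⊗ h₍₂₎) ⊗ h₍₃₎`. -/
def comul3H : H →ₗ[k] (H ⊗[k] H) ⊗[k] H :=
  LinearMap.rTensor H (comulH k H) ∘ₗ comulH k H

/-- The comultiplication of the tensor product coalgebra `(H ⊗ H) ⊗ H`. -/
def comul3 : (H ⊗[k] H) ⊗[k] H →ₗ[k]
    ((H ⊗[k] H) ⊗[k] H) ⊗[k] ((H ⊗[k] H) ⊗[k] H) :=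
  (TensorProduct.tensorTensorTensorComm k (H ⊗[k] H) (H ⊗[k] H) H H).toLinearMap ∘ₗ
    TensorProduct.map (comul2 k H) (comulH k H)

/-- The target map `Π^L(h) = Σ ε(1₍₁₎ h) 1₍₂₎`. -/
def piL : H →ₗ[k] H :=
  (TensorProduct.lid k H).toLinearMap ∘ₗ
    TensorProduct.map (counitH k H) (LinearMap.id : H →ₗ[k] H) ∘ₗ
      LinearMap.mulLeft k (comulH k H 1) ∘ₗ (TensorProduct.mk k H H).flip 1

/-- The source map `Π^R(h) = Σ 1₍₁₎ ε(h 1₍₂₎)`. -/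
def piR : H →ₗ[k] H :=
  (TensorProduct.rid k H).toLinearMap ∘ₗ
    TensorProduct.map (LinearMap.id : H →ₗ[k] H) (counitH k H) ∘ₗ
      LinearMap.mulRight k (comulH k H 1) ∘ₗ TensorProduct.mk k H H 1

/-- The axioms of a weak bialgebra:  `Δ` is multiplicative, the weak counit
axiom `ε(xyz) = Σ ε(x y₍₁₎) ε(y₍₂₎ z) = Σ ε(x y₍₂₎) ε(y₍₁₎ z)` holds, and the
weak unit axiom
`(Δ⊗id)(Δ(1)) = (Δ(1)⊗1)(1⊗Δ(1)) = (1⊗Δ(1))(Δ(1)⊗1)` holds. -/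
structure IsWeakBialgebra : Prop where
  comul_mul : ∀ x y : H, comulH k H (x * y) = comulH k H x * comulH k H y
  counit_mul : ∀ x y z : H,
    counitH k H (x * y * z) =
      (LinearMap.mul' k k ∘ₗ TensorProduct.map
        (counitH k H ∘ₗ LinearMap.mulLeft k x)
        (counitH k H ∘ₗ LinearMap.mulRight k z)) (comulH k H y)
  counit_mul_op : ∀ x y z : H,
    counitH k H (x * y * z) =
      (LinearMap.mul' k k ∘ₗ TensorProduct.map
        (counitH k H ∘ₗ LinearMap.mulLeft k x)
        (counitH k H ∘ₗ LinearMap.mulRight k z))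
        (TensorProduct.comm k H H (comulH k H y))
  comul_one_left :
    comul3H k H 1 =
      (comulH k H 1 ⊗ₜ[k] (1 : H)) *
        (TensorProduct.assoc k H H H).symm ((1 : H) ⊗ₜ[k] comulH k H 1)
  comul_one_right :
    comul3H k H 1 =
      ((TensorProduct.assoc k H H H).symm ((1 : H) ⊗ₜ[k] comulH k H 1)) *
        (comulH k H 1 ⊗ₜ[k] (1 : H))

/-- The axioms of an antipode of a weak Hopf algebra:
`Σ h₍₁₎ S(h₍₂₎) = Π^L(h)`, `Σ S(h₍₁₎) h₍₂₎ = Π^R(h)` and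
`Σ S(h₍₁₎) h₍₂₎ S(h₍₃₎) = S(h)`. -/
structure IsWeakHopf (S : H →ₗ[k] H) : Prop where
  antipode_left : ∀ h : H,
    LinearMap.mul' k H (LinearMap.lTensor H S (comulH k H h)) = piL k H h
  antipode_right : ∀ h : H,
    LinearMap.mul' k H (LinearMap.rTensor H S (comulH k H h)) = piR k H h
  antipode_mid : ∀ h : H,
    LinearMap.mul' k H
      (TensorProduct.map (LinearMap.mul' k H ∘ₗ LinearMap.rTensor H S) S
        (comul3H k H h)) = S h

variable {k H A}

/-- `h ↦ ρ(h ⊗ a)`. -/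
def rhoAt (ρ : H ⊗[k] A →ₗ[k] A) (a : A) : H →ₗ[k] A :=
  ρ ∘ₗ (TensorProduct.mk k H A).flip a

/-- `ρ` is a weak measure of `H` on `A`:
`ρ(h ⊗ ab) = Σ ρ(h₍₁₎ ⊗ a) ρ(h₍₂₎ ⊗ b)`. -/
def IsWeakMeasure (ρ : H ⊗[k] A →ₗ[k] A) : Prop :=
  ∀ (h : H) (a b : A),
    ρ (h ⊗ₜ[k] (a * b)) =
      (LinearMap.mul' k A ∘ₗ TensorProduct.map ρ ρ)
        (TensorProduct.tensorTensorTensorComm k H H A A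
          (comulH k H h ⊗ₜ[k] (a ⊗ₜ[k] b)))

/-- Convolution product on `Hom(H, B)`: `(α * β)(h) = Σ α(h₍₁₎) β(h₍₂₎)`. -/
def conv1 {B : Type*} [Ring B] [Algebra k B] (α β : H →ₗ[k] B) : H →ₗ[k] B :=
  LinearMap.mul' k B ∘ₗ TensorProduct.map α β ∘ₗ comulH k H

/-- Convolution product on `Hom(H ⊗ H, A)` with respect to the tensor product
coalgebra structure of `H ⊗ H`. -/
def conv2 (α β : H ⊗[k] H →ₗ[k] A) : H ⊗[k] H →ₗ[k] A :=
  LinearMap.mul' k A ∘ₗ TensorProduct.map α β ∘ₗ comul2 k H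

/-- `(h, g) ↦ Σ α(h₍₁₎ ⊗ g₍₁₎) ε(h₍₂₎ g₍₂₎)`. -/
def convCounitR (α : H ⊗[k] H →ₗ[k] A) : H ⊗[k] H →ₗ[k] A :=
  (TensorProduct.rid k A).toLinearMap ∘ₗ
    TensorProduct.map α (counitH k H ∘ₗ LinearMap.mul' k H) ∘ₗ comul2 k H

/-- `(h, g) ↦ Σ ε(h₍₁₎ g₍₁₎) α(h₍₂₎ ⊗ g₍₂₎)`. -/
def convCounitL (α : H ⊗[k] H →ₗ[k] A) : H ⊗[k] H →ₗ[k] A :=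
  (TensorProduct.lid k A).toLinearMap ∘ₗ
    TensorProduct.map (counitH k H ∘ₗ LinearMap.mul' k H) α ∘ₗ comul2 k H

/-- `L(φ)(a ⊗ h) = Σ a φ(h₍₁₎) ⊗ h₍₂₎`. -/
def Lmap (φ : H →ₗ[k] A) : A ⊗[k] H →ₗ[k] A ⊗[k] H :=
  LinearMap.rTensor H (LinearMap.mul' k A ∘ₗ LinearMap.lTensor A φ) ∘ₗ
    (TensorProduct.assoc k A H H).symm.toLinearMap ∘ₗ
      LinearMap.lTensor A (comulH k H)

/-- The idempotent `∇_ρ(a ⊗ h) = Σ a ρ(h₍₁₎ ⊗ 1) ⊗ h₍₂₎`. -/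
def nablaRho (ρ : H ⊗[k] A →ₗ[k] A) : A ⊗[k] H →ₗ[k] A ⊗[k] H :=
  Lmap (rhoAt ρ 1)

/-- The twisting map `χ_ρ(h ⊗ a) = Σ ρ(h₍₁₎ ⊗ a) ⊗ h₍₂₎`. -/
def chiRho (ρ : H ⊗[k] A →ₗ[k] A) : H ⊗[k] A →ₗ[k] A ⊗[k] H :=
  LinearMap.rTensor H ρ ∘ₗ (rightComm k H H A).toLinearMap ∘ₗ
    LinearMap.rTensor A (comulH k H)

/-- The preunit `ν = Σ ρ(1₍₁₎ ⊗ 1_A) ⊗ 1₍₂₎ ∈ A ⊗ H`. -/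
def nu (ρ : H ⊗[k] A →ₗ[k] A) : A ⊗[k] H :=
  chiRho ρ ((1 : H) ⊗ₜ[k] (1 : A))

/-- `F_f(h ⊗ g) = Σ f(h₍₁₎ ⊗ g₍₁₎) ⊗ h₍₂₎ g₍₂₎`. -/
def Fmap (f : H ⊗[k] H →ₗ[k] A) : H ⊗[k] H →ₗ[k] A ⊗[k] H :=
  TensorProduct.map f (LinearMap.mul' k H) ∘ₗ comul2 k H

/-- The twisted module condition:
`Σ f(h₍₁₎⊗g₍₁₎) ρ(h₍₂₎g₍₂₎⊗a) = Σ ρ(h₍₁₎ ⊗ ρ(g₍₁₎⊗a)) f(h₍₂₎⊗g₍₂₎)`. -/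
def IsTwistedModule (ρ : H ⊗[k] A →ₗ[k] A) (f : H ⊗[k] H →ₗ[k] A) : Prop :=
  ∀ a : A,
    conv2 f (rhoAt ρ a ∘ₗ LinearMap.mul' k H) =
      conv2 (ρ ∘ₗ LinearMap.lTensor H (rhoAt ρ a)) f

/-- The cocycle condition:
`Σ f(h₍₁₎⊗g₍₁₎) f(h₍₂₎g₍₂₎⊗l) = Σ ρ(h₍₁₎ ⊗ f(g₍₁₎⊗l₍₁₎)) f(h₍₂₎ ⊗ g₍₂₎l₍₂₎)`. -/
def IsCocycle (ρ : H ⊗[k] A →ₗ[k] A) (f : H ⊗[k] H →ₗ[k] A) : Prop :=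
  LinearMap.mul' k A ∘ₗ
      TensorProduct.map f (f ∘ₗ LinearMap.rTensor H (LinearMap.mul' k H)) ∘ₗ
        (TensorProduct.assoc k (H ⊗[k] H) (H ⊗[k] H) H).toLinearMap ∘ₗ
          LinearMap.rTensor H (comul2 k H) =
    LinearMap.mul' k A ∘ₗ
      TensorProduct.map
        (ρ ∘ₗ LinearMap.lTensor H f ∘ₗ (TensorProduct.assoc k H H H).toLinearMap)
        (f ∘ₗ LinearMap.lTensor H (LinearMap.mul' k H) ∘ₗ
          (TensorProduct.assoc k H H H).toLinearMap) ∘ₗ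
        comul3 k H

/-- The data `(ρ, f)` of a unitary weak crossed product, i.e. conditions
(i)–(v) of the paper: `ρ` is a weak measure, `f` is normalized
(`f(h⊗g) = Σ f(h₍₁₎⊗g₍₁₎) ρ(h₍₂₎g₍₂₎⊗1)`), `f` is a cocycle satisfying the
twisted module condition, and the preunit conditions for
`ν = Σ ρ(1₍₁₎⊗1)⊗1₍₂₎` hold. -/
structure IsCrossedProdData (ρ : H ⊗[k] A →ₗ[k] A) (f : H ⊗[k] H →ₗ[k] A) : Prop where
  measure : IsWeakMeasure ρ
  normal : f = conv2 f (rhoAt ρ 1 ∘ₗ LinearMap.mul' k H)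
  twisted : IsTwistedModule ρ f
  cocycle : IsCocycle ρ f
  preunit_left : ∀ h : H,
    rhoAt ρ 1 h =
      (LinearMap.mul' k A ∘ₗ TensorProduct.map ρ f)
        (TensorProduct.tensorTensorTensorComm k H H A H
          (comulH k H h ⊗ₜ[k] nu ρ))
  preunit_right : ∀ h : H,
    rhoAt ρ 1 h =
      (LinearMap.mul' k A ∘ₗ
        LinearMap.lTensor A (f ∘ₗ (TensorProduct.mk k H H).flip h)) (nu ρ)
  preunit_mid : ∀ a : A,
    Lmap (rhoAt ρ a) (nu ρ) =
      LinearMap.rTensor H (LinearMap.mulLeft k a) (nu ρ)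

/-- `E = A ×_ρ^f H`, the image of the idempotent `∇_ρ`. -/
abbrev CrossE (ρ : H ⊗[k] A →ₗ[k] A) : Submodule k (A ⊗[k] H) :=
  LinearMap.range (nablaRho ρ)

/-- The inclusion `ι : E → A ⊗ H`. -/
def iotaE (ρ : H ⊗[k] A →ₗ[k] A) : CrossE ρ →ₗ[k] A ⊗[k] H :=
  (CrossE ρ).subtype

/-- The projection `p : A ⊗ H → E`, the corestriction of `∇_ρ`. -/
def pE (ρ : H ⊗[k] A →ₗ[k] A) : A ⊗[k] H →ₗ[k] CrossE ρ :=
  (nablaRho ρ).rangeRestrict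

/-- The product `μ♯((a⊗h)⊗(b⊗g)) = Σ a ρ(h₍₁₎⊗b) f(h₍₂₎⊗g₍₁₎) ⊗ h₍₃₎g₍₂₎`. -/
def muSharp (ρ : H ⊗[k] A →ₗ[k] A) (f : H ⊗[k] H →ₗ[k] A) :
    (A ⊗[k] H) ⊗[k] (A ⊗[k] H) →ₗ[k] A ⊗[k] H :=
  LinearMap.rTensor H (LinearMap.mul' k A) ∘ₗ
  (TensorProduct.assoc k A A H).symm.toLinearMap ∘ₗ
  LinearMap.lTensor A
    (LinearMap.rTensor H (LinearMap.mul' k A) ∘ₗ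
     (TensorProduct.assoc k A A H).symm.toLinearMap ∘ₗ
     LinearMap.lTensor A (Fmap f) ∘ₗ
     (TensorProduct.assoc k A H H).toLinearMap ∘ₗ
     LinearMap.rTensor H (chiRho ρ) ∘ₗ
     (TensorProduct.assoc k H A H).symm.toLinearMap) ∘ₗ
  (TensorProduct.assoc k A H (A ⊗[k] H)).toLinearMap

/-- The product of the unitary crossed product `E = A ×_ρ^f H`. -/
def crossMul (ρ : H ⊗[k] A →ₗ[k] A) (f : H ⊗[k] H →ₗ[k] A) (x y : CrossE ρ) :
    CrossE ρ :=
  pE ρ (muSharp ρ f (iotaE ρ x ⊗ₜ[k] iotaE ρ y))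

/-- The product of the crossed product as a linear map. -/
def mulE (ρ : H ⊗[k] A →ₗ[k] A) (f : H ⊗[k] H →ₗ[k] A) :
    CrossE ρ ⊗[k] CrossE ρ →ₗ[k] CrossE ρ :=
  pE ρ ∘ₗ muSharp ρ f ∘ₗ TensorProduct.map (iotaE ρ) (iotaE ρ)

/-- The unit `1_E = p(ν)` of the crossed product. -/
def crossOne (ρ : H ⊗[k] A →ₗ[k] A) : CrossE ρ := pE ρ (nu ρ)

/-- `γ(h) = p(1_A ⊗ h)`. -/
def gammaE (ρ : H ⊗[k] A →ₗ[k] A) : H →ₗ[k] CrossE ρ :=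
  pE ρ ∘ₗ TensorProduct.mk k A H 1

/-- `a ↦ Σ a ν_A ⊗ ν_H`. -/
def jnuAux (ρ : H ⊗[k] A →ₗ[k] A) : A →ₗ[k] A ⊗[k] H :=
  LinearMap.rTensor H (LinearMap.mul' k A) ∘ₗ
    (TensorProduct.assoc k A A H).symm.toLinearMap ∘ₗ
      (TensorProduct.mk k A (A ⊗[k] H)).flip (nu ρ)

/-- `j_ν(a) = p(Σ a ν_A ⊗ ν_H)`. -/
def jnuE (ρ : H ⊗[k] A →ₗ[k] A) : A →ₗ[k] CrossE ρ := pE ρ ∘ₗ jnuAux ρ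

/-- The left action `a ▸ (b ⊗ h) = ab ⊗ h` of `A` on `A ⊗ H`. -/
def aAct (a : A) : A ⊗[k] H →ₗ[k] A ⊗[k] H :=
  LinearMap.rTensor H (LinearMap.mulLeft k a)

/-- The comodule structure `δ_E = (p ⊗ id) ∘ (id ⊗ Δ) ∘ ι` of the crossed
product. -/
def deltaE (ρ : H ⊗[k] A →ₗ[k] A) : CrossE ρ →ₗ[k] CrossE ρ ⊗[k] H :=
  LinearMap.rTensor H (pE ρ) ∘ₗ
    (TensorProduct.assoc k A H H).symm.toLinearMap ∘ₗ
      LinearMap.lTensor A (comulH k H) ∘ₗ iotaE ρ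

/-- The componentwise product `(x⊗h)(y⊗g) = x·y ⊗ hg` on `E ⊗ H`. -/
def mulEH (ρ : H ⊗[k] A →ₗ[k] A) (f : H ⊗[k] H →ₗ[k] A) :
    (CrossE ρ ⊗[k] H) ⊗[k] (CrossE ρ ⊗[k] H) →ₗ[k] CrossE ρ ⊗[k] H :=
  TensorProduct.map (mulE ρ f) (LinearMap.mul' k H) ∘ₗ
    (TensorProduct.tensorTensorTensorComm k (CrossE ρ) H (CrossE ρ) H).toLinearMap

/-- Convolution on `Hom(H, E)` using the crossed product multiplication. -/
def convE (ρ : H ⊗[k] A →ₗ[k] A) (f : H ⊗[k] H →ₗ[k] A)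
    (α β : H →ₗ[k] CrossE ρ) : H →ₗ[k] CrossE ρ :=
  mulE ρ f ∘ₗ TensorProduct.map α β ∘ₗ comulH k H

/-- `γ⁻¹(h) = Σ j_ν(f⁻¹(S(h₍₁₎)₍₁₎ ⊗ h₍₂₎)) · γ(S(h₍₁₎)₍₂₎)`. -/
def gammaInv (ρ : H ⊗[k] A →ₗ[k] A) (f : H ⊗[k] H →ₗ[k] A)
    (S : H →ₗ[k] H) (fi : H ⊗[k] H →ₗ[k] A) : H →ₗ[k] CrossE ρ :=
  mulE ρ f ∘ₗ
    TensorProduct.map (jnuE ρ ∘ₗ fi) (gammaE ρ) ∘ₗ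
      (rightComm k H H H).toLinearMap ∘ₗ
        LinearMap.rTensor H (comulH k H) ∘ₗ
          LinearMap.rTensor H S ∘ₗ comulH k H

/-- `(id ⊗ ε) : A ⊗ H → A`. -/
def epsA : A ⊗[k] H →ₗ[k] A :=
  (TensorProduct.rid k A).toLinearMap ∘ₗ LinearMap.lTensor A (counitH k H)

/-- Right `H`-comodule algebra structure on a unital algebra `B`. -/
structure IsComodAlg {B : Type*} [Ring B] [Algebra k B]
    (δB : B →ₗ[k] B ⊗[k] H) : Prop where
  counit : ∀ b : B,
    (TensorProduct.rid k B) (LinearMap.lTensor B (counitH k H) (δB b)) = b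
  coassoc : (TensorProduct.assoc k B H H).toLinearMap ∘ₗ
      LinearMap.rTensor H δB ∘ₗ δB = LinearMap.lTensor B (comulH k H) ∘ₗ δB
  mul_compat : ∀ x y : B, δB (x * y) = δB x * δB y
  one_compat : LinearMap.lTensor B (piL k H) (δB 1) = δB 1

/-- `(B, j)` is an `H`-cleft extension of `A`, with cleaving map `γ` and
convolution inverse `γi`. -/
structure IsCleft {B : Type*} [Ring B] [Algebra k B]
    (δB : B →ₗ[k] B ⊗[k] H) (j : A →ₗ[k] B) (γ γi : H →ₗ[k] B) : Prop where
  comodAlg : IsComodAlg δB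
  j_mul : ∀ a b : A, j (a * b) = j a * j b
  j_one : j 1 = 1
  j_inj : Function.Injective j
  j_equalizes : ∀ a : A,
    LinearMap.lTensor B (piL k H) (δB (j a)) = δB (j a)
  j_equalizer : ∀ (X : Type*) [AddCommGroup X] [Module k X] (g : X →ₗ[k] B),
    (∀ x : X, LinearMap.lTensor B (piL k H) (δB (g x)) = δB (g x)) →
      ∃! g' : X →ₗ[k] A, j ∘ₗ g' = g
  colinear : ∀ h : H, δB (γ h) = LinearMap.rTensor H γ (comulH k H h)
  total : γ 1 = 1
  inv_left : conv1 γi γ = γ ∘ₗ piR k H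
  inv_right : conv1 γ γi = γ ∘ₗ piL k H
  inv_norm : conv1 (γ ∘ₗ piR k H) γi = γi
  factors : ∃ t : H →ₗ[k] A, γ ∘ₗ piL k H = j ∘ₗ t

/-- `q(x) = Σ x₍₀₎ γ⁻¹(x₍₁₎)`. -/
def qMap {B : Type*} [Ring B] [Algebra k B]
    (δB : B →ₗ[k] B ⊗[k] H) (γi : H →ₗ[k] B) : B →ₗ[k] B :=
  LinearMap.mul' k B ∘ₗ LinearMap.lTensor B γi ∘ₗ δB

/-- `ρ(h ⊗ a) = p(γ(h) j(a))`. -/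
def cleftRho {B : Type*} [Ring B] [Algebra k B]
    (γ : H →ₗ[k] B) (j : A →ₗ[k] B) (p : B →ₗ[k] A) : H ⊗[k] A →ₗ[k] A :=
  p ∘ₗ LinearMap.mul' k B ∘ₗ TensorProduct.map γ j

/-- `f(h ⊗ g) = p(γ(h) γ(g))`. -/
def cleftF {B : Type*} [Ring B] [Algebra k B]
    (γ : H →ₗ[k] B) (p : B →ₗ[k] A) : H ⊗[k] H →ₗ[k] A :=
  p ∘ₗ LinearMap.mul' k B ∘ₗ TensorProduct.map γ γ

/-- `w(a ⊗ h) = j(a) γ(h)`. -/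
def wMap {B : Type*} [Ring B] [Algebra k B]
    (j : A →ₗ[k] B) (γ : H →ₗ[k] B) : A ⊗[k] H →ₗ[k] B :=
  LinearMap.mul' k B ∘ₗ TensorProduct.map j γ

end WeakCrossed

namespace WeakCrossed
open Coalgebra

section Proof13
set_option synthInstance.maxHeartbeats 1000000

variable {k : Type*} [Field k]
variable {H : Type*} [Ring H] [Algebra k H] [Coalgebra k H]
variable {A : Type*} [Ring A] [Algebra k A]

lemma nabla_tmul (ρ : H ⊗[k] A →ₗ[k] A) (a : A) (h : H) (r : Repr k h (H × H)) :
    nablaRho ρ (a ⊗ₜ[k] h) =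
      ∑ i ∈ r.index, (a * ρ (r.left i ⊗ₜ[k] (1:A))) ⊗ₜ[k] r.right i := by
  simp only [nablaRho, Lmap, rhoAt, LinearMap.comp_apply, LinearMap.lTensor_tmul,
    LinearEquiv.coe_coe]
  rw [show (comulH k H) h = Coalgebra.comul h from rfl, ← r.eq]
  simp [TensorProduct.tmul_sum, TensorProduct.sum_tmul, rhoAt]

lemma nu_eq (ρ : H ⊗[k] A →ₗ[k] A) (r : Repr k (1:H) (H × H)) :
    nu ρ = ∑ i ∈ r.index, ρ (r.left i ⊗ₜ[k] (1:A)) ⊗ₜ[k] r.right i := by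
  simp only [nu, chiRho, rightComm, LinearMap.comp_apply, LinearMap.rTensor_tmul,
    LinearEquiv.coe_coe]
  rw [show (comulH k H) (1:H) = Coalgebra.comul 1 from rfl, ← r.eq]
  simp [TensorProduct.sum_tmul]

lemma measure_one {ρ : H ⊗[k] A →ₗ[k] A} (hM : IsWeakMeasure ρ) (h : H) (r : Repr k h (H × H)) :
    ρ (h ⊗ₜ[k] (1:A)) =
      ∑ i ∈ r.index, ρ (r.left i ⊗ₜ[k] (1:A)) * ρ (r.right i ⊗ₜ[k] (1:A)) := by
  have := hM h 1 1
  rw [mul_one] at this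
  rw [this, show (comulH k H) h = Coalgebra.comul h from rfl, ← r.eq]
  simp [TensorProduct.sum_tmul, TensorProduct.tmul_sum, LinearMap.mul'_apply]

lemma coassoc_sums (h : H) (r : Repr k h (H × H)) (rl : ∀ i : r.ι, Repr k (r.left i) (H × H))
    (rr : ∀ i : r.ι, Repr k (r.right i) (H × H)) :
    (∑ i ∈ r.index, ∑ j ∈ (rl i).index,
      ((rl i).left j ⊗ₜ[k] (rl i).right j) ⊗ₜ[k] r.right i : (H ⊗[k] H) ⊗[k] H) =
    ∑ i ∈ r.index, ∑ j ∈ (rr i).index,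
      (r.left i ⊗ₜ[k] (rr i).left j) ⊗ₜ[k] (rr i).right j := by
  have h1 := Coalgebra.sum_tmul_tmul_eq r rl rr
  have h2 := congrArg (TensorProduct.assoc k H H H).symm h1
  simpa [map_sum] using h2

lemma nabla_idem (ρ : H ⊗[k] A →ₗ[k] A) (hM : IsWeakMeasure ρ) :
    nablaRho ρ ∘ₗ nablaRho ρ = nablaRho ρ := by
  apply TensorProduct.ext'
  intro a h
  set r := ℛ k h with hr
  simp only [LinearMap.comp_apply]
  rw [nabla_tmul ρ a h r, map_sum]
  rw [Finset.sum_congr rfl (fun i _ => nabla_tmul ρ _ _ (ℛ k (r.right i)))]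
  have key := congrArg (LinearMap.rTensor H
    (LinearMap.mulLeft k a ∘ₗ LinearMap.mul' k A ∘ₗ
      TensorProduct.map (rhoAt ρ 1) (rhoAt ρ 1)))
    (coassoc_sums h r (fun i => ℛ k (r.left i)) (fun i => ℛ k (r.right i)))
  simp only [map_sum, LinearMap.rTensor_tmul, LinearMap.comp_apply,
    TensorProduct.map_tmul, LinearMap.mul'_apply, LinearMap.mulLeft_apply,
    rhoAt, LinearMap.comp_apply, TensorProduct.mk_apply, LinearMap.flip_apply] at key
  calc ∑ i ∈ r.index, ∑ j ∈ (ℛ k (r.right i)).index,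
        (a * ρ (r.left i ⊗ₜ[k] 1) * ρ ((ℛ k (r.right i)).left j ⊗ₜ[k] 1)) ⊗ₜ[k]
          (ℛ k (r.right i)).right j
      = ∑ i ∈ r.index, ∑ j ∈ (ℛ k (r.left i)).index,
        (a * (ρ ((ℛ k (r.left i)).left j ⊗ₜ[k] 1) * ρ ((ℛ k (r.left i)).right j ⊗ₜ[k] 1)))
          ⊗ₜ[k] r.right i := by
        simp only [mul_assoc]; exact key.symm
    _ = ∑ i ∈ r.index, (a * ρ (r.left i ⊗ₜ[k] 1)) ⊗ₜ[k] r.right i := by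
        refine Finset.sum_congr rfl fun i _ => ?_
        rw [← TensorProduct.sum_tmul, ← Finset.mul_sum, ← measure_one hM _ (ℛ k (r.left i))]
lemma piL_apply (h : H) (r : Repr k (1:H) (H × H)) :
    piL k H h = ∑ i ∈ r.index, counitH k H (r.left i * h) • r.right i := by
  simp only [piL, LinearMap.comp_apply, LinearMap.flip_apply, TensorProduct.mk_apply,
    LinearMap.mulLeft_apply, LinearEquiv.coe_coe]
  rw [show (comulH k H) (1:H) = Coalgebra.comul 1 from rfl, ← r.eq]
  simp [Finset.sum_mul, Algebra.TensorProduct.tmul_mul_tmul, TensorProduct.smul_tmul]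

lemma psi_comul (z : H) :
    ((TensorProduct.rid k H).toLinearMap ∘ₗ LinearMap.lTensor H (counitH k H))
      (Coalgebra.comul (R := k) z) = z := by
  simp [show (counitH k H) = Coalgebra.counit from rfl]

lemma comul_mul_sums (hWB : IsWeakBialgebra k H) (x y : H) (rx : Repr k x (H × H)) (ry : Repr k y (H × H)) :
    Coalgebra.comul (R := k) (x * y) =
      ∑ i ∈ rx.index, ∑ j ∈ ry.index,
        (rx.left i * ry.left j) ⊗ₜ[k] (rx.right i * ry.right j) := by
  have := hWB.comul_mul x y
  rw [show comulH k H (x*y) = Coalgebra.comul (x*y) from rfl] at this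
  rw [this, show (comulH k H) x = Coalgebra.comul x from rfl,
    show (comulH k H) y = Coalgebra.comul y from rfl, ← rx.eq, ← ry.eq,
    Finset.sum_mul_sum]
  simp [Algebra.TensorProduct.tmul_mul_tmul]

lemma comul3_one_sums (hWB : IsWeakBialgebra k H) (r1 r1' : Repr k (1:H) (H × H))
    (rl : ∀ j : r1.ι, Repr k (r1.left j) (H × H)) :
    (∑ j ∈ r1.index, ∑ m ∈ r1'.index,
      (r1.left j ⊗ₜ[k] (r1'.left m * r1.right j)) ⊗ₜ[k] r1'.right m
        : (H ⊗[k] H) ⊗[k] H) =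
    ∑ j ∈ r1.index, ∑ m ∈ (rl j).index,
      ((rl j).left m ⊗ₜ[k] (rl j).right m) ⊗ₜ[k] r1.right j := by
  have h1 : comul3H k H (1:H) =
      ∑ j ∈ r1.index, ∑ m ∈ (rl j).index,
        ((rl j).left m ⊗ₜ[k] (rl j).right m) ⊗ₜ[k] r1.right j := by
    simp only [comul3H, LinearMap.comp_apply]
    rw [show (comulH k H) (1:H) = Coalgebra.comul 1 from rfl, ← r1.eq, map_sum]
    refine Finset.sum_congr rfl fun j _ => ?_
    rw [LinearMap.rTensor_tmul,
      show (comulH k H) (r1.left j) = Coalgebra.comul (r1.left j) from rfl, ← (rl j).eq,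
      TensorProduct.sum_tmul]
  have h2 := hWB.comul_one_right
  rw [h1, show (comulH k H) (1:H) = Coalgebra.comul 1 from rfl] at h2
  nth_rewrite 1 [← r1'.eq] at h2
  nth_rewrite 1 [← r1.eq] at h2
  rw [TensorProduct.tmul_sum, map_sum, TensorProduct.sum_tmul, Finset.sum_mul_sum] at h2
  have h4 : ∀ (m : r1'.ι) (j : r1.ι),
      ((TensorProduct.assoc k H H H).symm
        ((1:H) ⊗ₜ[k] (r1'.left m ⊗ₜ[k] r1'.right m)) : (H ⊗[k] H) ⊗[k] H) *
        ((r1.left j ⊗ₜ[k] r1.right j) ⊗ₜ[k] (1:H)) =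
      (r1.left j ⊗ₜ[k] (r1'.left m * r1.right j)) ⊗ₜ[k] r1'.right m := by
    intro m j
    rw [TensorProduct.assoc_symm_tmul, Algebra.TensorProduct.tmul_mul_tmul,
      Algebra.TensorProduct.tmul_mul_tmul, one_mul, mul_one]
  rw [Finset.sum_congr rfl (fun m _ => Finset.sum_congr rfl fun j _ => h4 m j)] at h2
  rw [Finset.sum_comm]
  exact h2.symm

lemma idA (hWB : IsWeakBialgebra k H) (h : H) (rh : Repr k h (H × H)) (r1 : Repr k (1:H) (H × H)) :
    ∑ i ∈ rh.index, rh.left i ⊗ₜ[k] piL k H (rh.right i) =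
    ∑ j ∈ r1.index, (r1.left j * h) ⊗ₜ[k] r1.right j := by
  classical
  set r1' := ℛ k (1:H)
  set rl : ∀ j : r1.ι, Repr k (r1.left j) (H × H) := fun j => ℛ k (r1.left j) with hrl
  -- step 1: Δh = Δ1 * Δh in sum form
  have c1 : (∑ i ∈ rh.index, rh.left i ⊗ₜ[k] rh.right i : H ⊗[k] H) =
      ∑ j ∈ r1.index, ∑ i ∈ rh.index,
        (r1.left j * rh.left i) ⊗ₜ[k] (r1.right j * rh.right i) := by
    rw [rh.eq]
    have := comul_mul_sums hWB 1 h r1 rh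
    rw [one_mul] at this
    exact this
  have e0 := congrArg (LinearMap.lTensor H (piL k H)) c1
  simp only [map_sum, LinearMap.lTensor_tmul] at e0
  rw [e0]
  -- step 2: expand piL with r1'
  have e1 : ∀ j ∈ r1.index, ∀ i ∈ rh.index,
      (r1.left j * rh.left i) ⊗ₜ[k] piL k H (r1.right j * rh.right i) =
      ∑ m ∈ r1'.index, counitH k H (r1'.left m * (r1.right j * rh.right i)) •
        ((r1.left j * rh.left i) ⊗ₜ[k] r1'.right m) := by
    intro j _ i _
    rw [piL_apply _ r1', TensorProduct.tmul_sum]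
    simp [TensorProduct.tmul_smul]
  rw [Finset.sum_congr rfl fun j hj => Finset.sum_congr rfl fun i hi => e1 j hj i hi]
  -- step 3: use comul3_one_sums, transported by Φ i, summed over i
  have E1 := comul3_one_sums hWB r1 r1' rl
  have e2 : ∀ i : rh.ι,
      (∑ j ∈ r1.index, ∑ m ∈ r1'.index,
        counitH k H ((r1'.left m * r1.right j) * rh.right i) •
          ((r1.left j * rh.left i) ⊗ₜ[k] r1'.right m)) =
      ∑ j ∈ r1.index, ∑ m ∈ (rl j).index,
        counitH k H ((rl j).right m * rh.right i) •
          (((rl j).left m * rh.left i) ⊗ₜ[k] r1.right j) := by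
    intro i
    have := congrArg (LinearMap.rTensor H
      ((TensorProduct.rid k H).toLinearMap ∘ₗ TensorProduct.map
        (LinearMap.mulRight k (rh.left i))
        (counitH k H ∘ₗ LinearMap.mulRight k (rh.right i)))) E1
    simpa [map_sum, TensorProduct.smul_tmul'] using this
  -- assemble
  calc ∑ j ∈ r1.index, ∑ i ∈ rh.index, ∑ m ∈ r1'.index,
        counitH k H (r1'.left m * (r1.right j * rh.right i)) •
          ((r1.left j * rh.left i) ⊗ₜ[k] r1'.right m)
      = ∑ i ∈ rh.index, ∑ j ∈ r1.index, ∑ m ∈ r1'.index,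
        counitH k H ((r1'.left m * r1.right j) * rh.right i) •
          ((r1.left j * rh.left i) ⊗ₜ[k] r1'.right m) := by
        rw [Finset.sum_comm]
        simp [mul_assoc]
    _ = ∑ i ∈ rh.index, ∑ j ∈ r1.index, ∑ m ∈ (rl j).index,
        counitH k H ((rl j).right m * rh.right i) •
          (((rl j).left m * rh.left i) ⊗ₜ[k] r1.right j) := by
        exact Finset.sum_congr rfl fun i _ => e2 i
    _ = ∑ j ∈ r1.index, (r1.left j * h) ⊗ₜ[k] r1.right j := by
        rw [Finset.sum_comm]
        refine Finset.sum_congr rfl fun j _ => ?_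
        have c2 := comul_mul_sums hWB (r1.left j) h (rl j) rh
        have e3 : ∑ i ∈ rh.index, ∑ m ∈ (rl j).index,
            counitH k H ((rl j).right m * rh.right i) • ((rl j).left m * rh.left i) =
            r1.left j * h := by
          have e4 := congrArg
            ((TensorProduct.rid k H).toLinearMap ∘ₗ LinearMap.lTensor H (counitH k H)) c2
          rw [psi_comul] at e4
          simp only [map_sum, LinearMap.comp_apply, LinearMap.lTensor_tmul,
            LinearEquiv.coe_coe, TensorProduct.rid_tmul] at e4
          rw [Finset.sum_comm] at e4
          exact e4.symm
        calc ∑ i ∈ rh.index, ∑ m ∈ (rl j).index,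
              counitH k H ((rl j).right m * rh.right i) •
                (((rl j).left m * rh.left i) ⊗ₜ[k] r1.right j)
            = (∑ i ∈ rh.index, ∑ m ∈ (rl j).index,
                counitH k H ((rl j).right m * rh.right i) •
                  ((rl j).left m * rh.left i)) ⊗ₜ[k] r1.right j := by
              rw [TensorProduct.sum_tmul]
              refine Finset.sum_congr rfl fun i _ => ?_
              rw [TensorProduct.sum_tmul]
              exact Finset.sum_congr rfl fun m _ => (TensorProduct.smul_tmul' _ _ _).symm
          _ = (r1.left j * h) ⊗ₜ[k] r1.right j := by rw [e3]
lemma sum_counit_smul (z : H) (r : Repr k z (H × H)) :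
    ∑ i ∈ r.index, counitH k H (r.right i) • r.left i = z := by
  have := congrArg (TensorProduct.rid k H) (Coalgebra.sum_tmul_counit_eq r)
  rw [map_sum] at this
  simp only [TensorProduct.rid_tmul, one_smul] at this
  exact this

lemma sum_counit_smul' (z : H) (r : Repr k z (H × H)) :
    ∑ i ∈ r.index, counitH k H (r.left i) • r.right i = z := by
  have := congrArg (TensorProduct.lid k H) (Coalgebra.sum_counit_tmul_eq r)
  rw [map_sum] at this
  simp only [TensorProduct.lid_tmul, one_smul] at this
  exact this

lemma eps_rho_sum (ρ : H ⊗[k] A →ₗ[k] A) (a : A) (z : H) (r : Repr k z (H × H)) :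
    ∑ j ∈ r.index, counitH k H (r.right j) • (a * ρ (r.left j ⊗ₜ[k] (1:A))) =
      a * ρ (z ⊗ₜ[k] (1:A)) := by
  have h1 : ∑ j ∈ r.index, counitH k H (r.right j) • ρ (r.left j ⊗ₜ[k] (1:A)) =
      ρ (z ⊗ₜ[k] (1:A)) := by
    have h2 := congrArg (rhoAt ρ 1) (sum_counit_smul z r)
    rw [map_sum] at h2
    simpa [rhoAt] using h2
  calc ∑ j ∈ r.index, counitH k H (r.right j) • (a * ρ (r.left j ⊗ₜ[k] (1:A)))
      = ∑ j ∈ r.index, a * (counitH k H (r.right j) • ρ (r.left j ⊗ₜ[k] (1:A))) := by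
        exact Finset.sum_congr rfl fun j _ => (mul_smul_comm _ _ _).symm
    _ = a * ρ (z ⊗ₜ[k] (1:A)) := by rw [← Finset.mul_sum, h1]

lemma jnuAux_eq (ρ : H ⊗[k] A →ₗ[k] A) (a : A) :
    jnuAux ρ a = nablaRho ρ (a ⊗ₜ[k] (1:H)) := by
  set r1 := ℛ k (1:H)
  rw [nabla_tmul ρ a 1 r1]
  simp only [jnuAux, LinearMap.comp_apply, LinearMap.flip_apply, TensorProduct.mk_apply,
    LinearEquiv.coe_coe]
  rw [nu_eq ρ r1, TensorProduct.tmul_sum, map_sum, map_sum]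
  simp [LinearMap.mul'_apply]

lemma epsA_jnuAux (ρ : H ⊗[k] A →ₗ[k] A) (hone : ∀ a : A, ρ ((1 : H) ⊗ₜ[k] a) = a)
    (a : A) : epsA (jnuAux ρ a) = a := by
  set r1 := ℛ k (1:H)
  rw [jnuAux_eq, nabla_tmul ρ a 1 r1]
  simp only [epsA, map_sum, LinearMap.comp_apply, LinearMap.lTensor_tmul,
    LinearEquiv.coe_coe, TensorProduct.rid_tmul]
  rw [eps_rho_sum ρ a 1 r1, hone, mul_one]

lemma comul3_one_left_sums (hWB : IsWeakBialgebra k H) (r1 r1' : Repr k (1:H) (H × H))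
    (rr : ∀ j : r1.ι, Repr k (r1.right j) (H × H)) :
    (∑ j ∈ r1.index, ∑ p ∈ (rr j).index,
      (r1.left j ⊗ₜ[k] (rr j).left p) ⊗ₜ[k] (rr j).right p : (H ⊗[k] H) ⊗[k] H) =
    ∑ i ∈ r1.index, ∑ m ∈ r1'.index,
      (r1.left i ⊗ₜ[k] (r1.right i * r1'.left m)) ⊗ₜ[k] r1'.right m := by
  have h0 := coassoc_sums (1:H) r1 (fun j => ℛ k (r1.left j)) rr
  have h1 : comul3H k H (1:H) =
      ∑ j ∈ r1.index, ∑ m ∈ (ℛ k (r1.left j)).index,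
        ((ℛ k (r1.left j)).left m ⊗ₜ[k] (ℛ k (r1.left j)).right m) ⊗ₜ[k] r1.right j := by
    simp only [comul3H, LinearMap.comp_apply]
    rw [show (comulH k H) (1:H) = Coalgebra.comul 1 from rfl, ← r1.eq, map_sum]
    refine Finset.sum_congr rfl fun j _ => ?_
    rw [LinearMap.rTensor_tmul,
      show (comulH k H) (r1.left j) = Coalgebra.comul (r1.left j) from rfl,
      ← (ℛ k (r1.left j)).eq, TensorProduct.sum_tmul]
  have h2 := hWB.comul_one_left
  rw [h1, show (comulH k H) (1:H) = Coalgebra.comul 1 from rfl] at h2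
  nth_rewrite 1 [← r1.eq] at h2
  rw [← r1'.eq] at h2
  rw [TensorProduct.tmul_sum, map_sum, TensorProduct.sum_tmul, Finset.sum_mul_sum] at h2
  have h4 : ∀ (i : r1.ι) (m : r1'.ι),
      ((r1.left i ⊗ₜ[k] r1.right i) ⊗ₜ[k] (1:H) : (H ⊗[k] H) ⊗[k] H) *
        (TensorProduct.assoc k H H H).symm
          ((1:H) ⊗ₜ[k] (r1'.left m ⊗ₜ[k] r1'.right m)) =
      (r1.left i ⊗ₜ[k] (r1.right i * r1'.left m)) ⊗ₜ[k] r1'.right m := by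
    intro i m
    rw [TensorProduct.assoc_symm_tmul, Algebra.TensorProduct.tmul_mul_tmul,
      Algebra.TensorProduct.tmul_mul_tmul, mul_one, one_mul]
  rw [Finset.sum_congr rfl (fun i _ => Finset.sum_congr rfl fun m _ => h4 i m)] at h2
  rw [← h0]
  exact h2

lemma comul_piL (hWB : IsWeakBialgebra k H) (g : H) (r1 : Repr k (1:H) (H × H)) :
    Coalgebra.comul (R := k) (piL k H g) =
      ∑ m ∈ r1.index, (piL k H g * r1.left m) ⊗ₜ[k] r1.right m := by
  classical
  set rc := ℛ k (1:H)
  set rrc : ∀ j : rc.ι, Repr k (rc.right j) (H × H) := fun j => ℛ k (rc.right j) with hrrc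
  have E2 := comul3_one_left_sums hWB rc r1 rrc
  have := congrArg (LinearMap.rTensor H
    ((TensorProduct.lid k H).toLinearMap ∘ₗ TensorProduct.map
      (counitH k H ∘ₗ LinearMap.mulRight k g) (LinearMap.id (R := k) (M := H)))) E2
  simp only [map_sum, LinearMap.rTensor_tmul, LinearMap.comp_apply,
    TensorProduct.map_tmul, LinearMap.mulRight_apply, LinearMap.id_coe, id_eq,
    LinearEquiv.coe_coe, TensorProduct.lid_tmul] at this
  have l1 : ∑ j ∈ rc.index, ∑ p ∈ (rrc j).index,
      ((counitH k H (rc.left j * g) • (rrc j).left p) ⊗ₜ[k] (rrc j).right p) =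
      Coalgebra.comul (R := k) (piL k H g) := by
    rw [piL_apply g rc, map_sum]
    refine Finset.sum_congr rfl fun j _ => ?_
    rw [map_smul, ← (rrc j).eq, Finset.smul_sum]
    exact Finset.sum_congr rfl fun p _ => (TensorProduct.smul_tmul' _ _ _).symm
  have l2 : ∑ i ∈ rc.index, ∑ m ∈ r1.index,
      ((counitH k H (rc.left i * g) • (rc.right i * r1.left m)) ⊗ₜ[k] r1.right m) =
      ∑ m ∈ r1.index, (piL k H g * r1.left m) ⊗ₜ[k] r1.right m := by
    rw [Finset.sum_comm]
    refine Finset.sum_congr rfl fun m _ => ?_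
    rw [piL_apply g rc, Finset.sum_mul, TensorProduct.sum_tmul]
    exact Finset.sum_congr rfl fun i _ => by rw [smul_mul_assoc]
  rw [l1, l2] at this
  exact this
lemma nabla_piL (hWB : IsWeakBialgebra k H) (ρ : H ⊗[k] A →ₗ[k] A)
    (hcomp : ∀ h g : H,
      ρ ((h * g) ⊗ₜ[k] (1 : A)) = ρ (h ⊗ₜ[k] ρ (g ⊗ₜ[k] (1 : A))))
    (hpiL : ∀ (h : H) (a : A),
      ρ (piL k H h ⊗ₜ[k] a) = ρ (h ⊗ₜ[k] (1 : A)) * a)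
    (b : A) (g : H) :
    nablaRho ρ (b ⊗ₜ[k] piL k H g) = jnuAux ρ (b * ρ (g ⊗ₜ[k] (1:A))) := by
  set r1 := ℛ k (1:H)
  let rp : Repr k (piL k H g) (H × H) :=
    { index := r1.index, left := fun m => piL k H g * r1.left m,
      right := r1.right, eq := (comul_piL hWB g r1).symm }
  rw [nabla_tmul ρ b (piL k H g) rp, jnuAux_eq, nabla_tmul ρ _ 1 r1]
  refine Finset.sum_congr rfl fun m _ => ?_
  show (b * ρ ((piL k H g * r1.left m) ⊗ₜ[k] (1:A))) ⊗ₜ[k] r1.right m = _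
  rw [hcomp, hpiL, mul_assoc]

lemma stepD (hWB : IsWeakBialgebra k H) (ρ : H ⊗[k] A →ₗ[k] A)
    (hM : IsWeakMeasure ρ)
    (hcomp : ∀ h g : H,
      ρ ((h * g) ⊗ₜ[k] (1 : A)) = ρ (h ⊗ₜ[k] ρ (g ⊗ₜ[k] (1 : A))))
    (hpiL : ∀ (h : H) (a : A),
      ρ (piL k H h ⊗ₜ[k] a) = ρ (h ⊗ₜ[k] (1 : A)) * a) :
    jnuAux ρ ∘ₗ epsA ∘ₗ nablaRho ρ =
      nablaRho ρ ∘ₗ LinearMap.lTensor A (piL k H) ∘ₗ nablaRho ρ := by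
  apply TensorProduct.ext'
  intro a h
  set r := ℛ k h
  simp only [LinearMap.comp_apply]
  rw [nabla_tmul ρ a h r]
  -- LHS
  have lhs : epsA (∑ i ∈ r.index, (a * ρ (r.left i ⊗ₜ[k] (1:A))) ⊗ₜ[k] r.right i) =
      a * ρ (h ⊗ₜ[k] (1:A)) := by
    simp only [epsA, map_sum, LinearMap.comp_apply, LinearMap.lTensor_tmul,
      LinearEquiv.coe_coe, TensorProduct.rid_tmul]
    exact eps_rho_sum ρ a h r
  rw [lhs]
  -- RHS
  rw [map_sum, map_sum]
  simp only [LinearMap.lTensor_tmul]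
  rw [Finset.sum_congr rfl (fun i _ => nabla_piL hWB ρ hcomp hpiL _ (r.right i))]
  rw [← map_sum]
  congr 1
  rw [measure_one hM h r, Finset.mul_sum]
  exact Finset.sum_congr rfl fun i _ => (mul_assoc _ _ _).symm
lemma C1 (hWB : IsWeakBialgebra k H) (r1 : Repr k (1:H) (H × H))
    (rr : ∀ i : r1.ι, Repr k (r1.right i) (H × H)) :
    (∑ i ∈ r1.index, ∑ p ∈ (rr i).index,
      (r1.left i ⊗ₜ[k] (rr i).left p) ⊗ₜ[k] piL k H ((rr i).right p)
        : (H ⊗[k] H) ⊗[k] H) =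
    ∑ i ∈ r1.index, ∑ p ∈ (rr i).index,
      (r1.left i ⊗ₜ[k] (rr i).left p) ⊗ₜ[k] (rr i).right p := by
  classical
  set rl : ∀ i : r1.ι, Repr k (r1.left i) (H × H) := fun i => ℛ k (r1.left i) with hrl
  have e1 : ∀ i : r1.ι,
      (∑ p ∈ (rr i).index,
        (r1.left i ⊗ₜ[k] (rr i).left p) ⊗ₜ[k] piL k H ((rr i).right p)
          : (H ⊗[k] H) ⊗[k] H) =
      ∑ j ∈ r1.index,
        (r1.left i ⊗ₜ[k] (r1.left j * r1.right i)) ⊗ₜ[k] r1.right j := by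
    intro i
    have := congrArg ((TensorProduct.assoc k H H H).symm.toLinearMap ∘ₗ
      TensorProduct.mk k H (H ⊗[k] H) (r1.left i)) (idA hWB (r1.right i) (rr i) r1)
    simpa [map_sum] using this
  calc (∑ i ∈ r1.index, ∑ p ∈ (rr i).index,
        (r1.left i ⊗ₜ[k] (rr i).left p) ⊗ₜ[k] piL k H ((rr i).right p)
          : (H ⊗[k] H) ⊗[k] H)
      = ∑ i ∈ r1.index, ∑ j ∈ r1.index,
        (r1.left i ⊗ₜ[k] (r1.left j * r1.right i)) ⊗ₜ[k] r1.right j :=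
        Finset.sum_congr rfl fun i _ => e1 i
    _ = ∑ i ∈ r1.index, ∑ j ∈ (rl i).index,
        ((rl i).left j ⊗ₜ[k] (rl i).right j) ⊗ₜ[k] r1.right i :=
        comul3_one_sums hWB r1 r1 rl
    _ = ∑ i ∈ r1.index, ∑ p ∈ (rr i).index,
        (r1.left i ⊗ₜ[k] (rr i).left p) ⊗ₜ[k] (rr i).right p :=
        coassoc_sums 1 r1 rl rr

lemma iota_pE (ρ : H ⊗[k] A →ₗ[k] A) (x : A ⊗[k] H) :
    (iotaE ρ (pE ρ x) : A ⊗[k] H) = nablaRho ρ x := rfl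

lemma nabla_iota (ρ : H ⊗[k] A →ₗ[k] A) (hM : IsWeakMeasure ρ) (e : CrossE ρ) :
    nablaRho ρ (iotaE ρ e) = iotaE ρ e := by
  obtain ⟨z, hz⟩ := e.2
  show nablaRho ρ e.1 = e.1
  rw [← hz]
  exact LinearMap.congr_fun (nabla_idem ρ hM) z

lemma pE_iota (ρ : H ⊗[k] A →ₗ[k] A) (hM : IsWeakMeasure ρ) (e : CrossE ρ) :
    pE ρ (iotaE ρ e) = e :=
  Subtype.ext (nabla_iota ρ hM e)

lemma iota_jnuE (ρ : H ⊗[k] A →ₗ[k] A) (hM : IsWeakMeasure ρ) (a : A) :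
    (iotaE ρ (jnuE ρ a) : A ⊗[k] H) = jnuAux ρ a := by
  show nablaRho ρ (jnuAux ρ a) = jnuAux ρ a
  rw [jnuAux_eq]
  exact LinearMap.congr_fun (nabla_idem ρ hM) _

lemma stepC (hWB : IsWeakBialgebra k H) (ρ : H ⊗[k] A →ₗ[k] A)
    (hM : IsWeakMeasure ρ) (a : A) :
    LinearMap.lTensor (CrossE ρ) (piL k H) (deltaE ρ (jnuE ρ a)) =
      deltaE ρ (jnuE ρ a) := by
  classical
  set r1 := ℛ k (1:H) with hr1
  set rr : ∀ i : r1.ι, Repr k (r1.right i) (H × H) := fun i => ℛ k (r1.right i) with hrr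
  set w := (TensorProduct.assoc k A H H).symm
    (LinearMap.lTensor A (comulH k H) (iotaE ρ (jnuE ρ a))) with hw
  have hdelta : deltaE ρ (jnuE ρ a) = LinearMap.rTensor H (pE ρ) w := by
    simp only [deltaE, LinearMap.comp_apply, LinearEquiv.coe_coe, hw]
  have comm : LinearMap.lTensor (CrossE ρ) (piL k H) (LinearMap.rTensor H (pE ρ) w) =
      LinearMap.rTensor H (pE ρ) (LinearMap.lTensor (A ⊗[k] H) (piL k H) w) := by
    rw [← LinearMap.comp_apply, ← LinearMap.comp_apply,
      LinearMap.lTensor_comp_rTensor, LinearMap.rTensor_comp_lTensor]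
  have wEq : w = ∑ i ∈ r1.index, ∑ p ∈ (rr i).index,
      ((a * ρ (r1.left i ⊗ₜ[k] (1:A))) ⊗ₜ[k] (rr i).left p) ⊗ₜ[k] (rr i).right p := by
    rw [hw, iota_jnuE ρ hM, jnuAux_eq, nabla_tmul ρ a 1 r1, map_sum, map_sum]
    refine Finset.sum_congr rfl fun i _ => ?_
    rw [LinearMap.lTensor_tmul,
      show (comulH k H) (r1.right i) = Coalgebra.comul (r1.right i) from rfl,
      ← (rr i).eq, TensorProduct.tmul_sum, map_sum]
    exact Finset.sum_congr rfl fun p _ => TensorProduct.assoc_symm_tmul _ _ _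
  have key : LinearMap.lTensor (A ⊗[k] H) (piL k H) w = w := by
    rw [wEq, map_sum]
    have trans := congrArg (LinearMap.rTensor H (LinearMap.rTensor H
      (LinearMap.mulLeft k a ∘ₗ rhoAt ρ 1))) (C1 hWB r1 rr)
    simp only [map_sum, LinearMap.rTensor_tmul, LinearMap.comp_apply,
      LinearMap.mulLeft_apply, rhoAt, TensorProduct.mk_apply,
      LinearMap.flip_apply] at trans
    simp only [map_sum, LinearMap.lTensor_tmul]
    exact trans
  rw [hdelta, comm, key]
lemma epsA_nabla (ρ : H ⊗[k] A →ₗ[k] A) (a : A) (z : H) :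
    epsA (nablaRho ρ (a ⊗ₜ[k] z)) = a * ρ (z ⊗ₜ[k] (1:A)) := by
  rw [nabla_tmul ρ a z (ℛ k z)]
  simp only [epsA, map_sum, LinearMap.comp_apply, LinearMap.lTensor_tmul,
    LinearEquiv.coe_coe, TensorProduct.rid_tmul]
  exact eps_rho_sum ρ a z (ℛ k z)

lemma epsN (ρ : H ⊗[k] A →ₗ[k] A) :
    LinearMap.rTensor H (epsA ∘ₗ nablaRho ρ) ∘ₗ
      ((TensorProduct.assoc k A H H).symm.toLinearMap ∘ₗ
        LinearMap.lTensor A (comulH k H)) = nablaRho ρ := by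
  apply TensorProduct.ext'
  intro a h
  set r := ℛ k h
  simp only [LinearMap.comp_apply, LinearEquiv.coe_coe, LinearMap.lTensor_tmul]
  rw [show (comulH k H) h = Coalgebra.comul h from rfl, ← r.eq, TensorProduct.tmul_sum,
    map_sum, map_sum, nabla_tmul ρ a h r]
  refine Finset.sum_congr rfl fun i _ => ?_
  rw [TensorProduct.assoc_symm_tmul, LinearMap.rTensor_tmul, LinearMap.comp_apply,
    epsA_nabla]
end Proof13
end WeakCrossed
namespace WeakCrossed

/-- If `A` is a left weak `H`-module algebra, then
`(A, j_ν)` is the equalizer of `δ_E` and `(id_E ⊗ Π^L) ∘ δ_E`. -/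
theorem statement_13 {k : Type*} [Field k]
    {H : Type*} [Ring H] [Algebra k H] [Coalgebra k H]
    {A : Type*} [Ring A] [Algebra k A]
    (hWB : IsWeakBialgebra k H)
    (ρ : H ⊗[k] A →ₗ[k] A) (f : H ⊗[k] H →ₗ[k] A)
    (hD : IsCrossedProdData ρ f)
    (hone : ∀ a : A, ρ ((1 : H) ⊗ₜ[k] a) = a)
    (hcomp : ∀ h g : H,
      ρ ((h * g) ⊗ₜ[k] (1 : A)) = ρ (h ⊗ₜ[k] ρ (g ⊗ₜ[k] (1 : A))))
    (hpiL : ∀ (h : H) (a : A),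
      ρ (piL k H h ⊗ₜ[k] a) = ρ (h ⊗ₜ[k] (1 : A)) * a) :
    Function.Injective (jnuE ρ) ∧
    (∀ a : A,
      LinearMap.lTensor (CrossE ρ) (piL k H) (deltaE ρ (jnuE ρ a)) =
        deltaE ρ (jnuE ρ a)) ∧
    (∀ (X : Type*) [AddCommGroup X] [Module k X] (g : X →ₗ[k] CrossE ρ),
      (∀ x : X,
        LinearMap.lTensor (CrossE ρ) (piL k H) (deltaE ρ (g x)) =
          deltaE ρ (g x)) →
        ∃! g' : X →ₗ[k] A, jnuE ρ ∘ₗ g' = g) := by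
  have hM := hD.measure
  have hinj : Function.Injective (jnuE ρ) := by
    intro a b hab
    have := congrArg (fun e : CrossE ρ => epsA (iotaE ρ e)) hab
    simpa only [iota_jnuE ρ hM, epsA_jnuAux ρ hone] using this
  refine ⟨hinj, fun a => stepC hWB ρ hM a, ?_⟩
  intro X _ _ g hg
  have hiotap : iotaE ρ ∘ₗ pE ρ = nablaRho ρ := LinearMap.ext fun x => rfl
  have claim : ∀ e : CrossE ρ,
      LinearMap.lTensor (CrossE ρ) (piL k H) (deltaE ρ e) = deltaE ρ e →
        jnuE ρ (epsA (iotaE ρ e)) = e := by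
    intro e hx
    set y : A ⊗[k] H := iotaE ρ e with hy'
    have hy : nablaRho ρ y = y := nabla_iota ρ hM e
    set w := (TensorProduct.assoc k A H H).symm
      (LinearMap.lTensor A (comulH k H) y) with hw
    have hdelta : deltaE ρ e = LinearMap.rTensor H (pE ρ) w := by
      simp only [deltaE, LinearMap.comp_apply, LinearEquiv.coe_coe, hw, hy']
    have c2 : LinearMap.rTensor H (iotaE ρ) ∘ₗ LinearMap.rTensor H (pE ρ) =
        LinearMap.rTensor H (nablaRho ρ) := by
      rw [← LinearMap.rTensor_comp, hiotap]
    have c1 : LinearMap.rTensor H (iotaE ρ) ∘ₗ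
        LinearMap.lTensor (CrossE ρ) (piL k H) ∘ₗ LinearMap.rTensor H (pE ρ) =
        LinearMap.lTensor (A ⊗[k] H) (piL k H) ∘ₗ
          LinearMap.rTensor H (nablaRho ρ) := by
      rw [← LinearMap.comp_assoc, LinearMap.rTensor_comp_lTensor,
        ← LinearMap.lTensor_comp_rTensor, LinearMap.comp_assoc, c2]
    have c1' := LinearMap.congr_fun c1 w
    have c2' := LinearMap.congr_fun c2 w
    simp only [LinearMap.comp_apply] at c1' c2'
    have step1 := congrArg (LinearMap.rTensor H (iotaE ρ)) hx
    rw [hdelta, c1', c2'] at step1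
    -- step1 : lTensor piL (rTensor N w) = rTensor N w
    have c3 : LinearMap.rTensor H epsA ∘ₗ LinearMap.lTensor (A ⊗[k] H) (piL k H) ∘ₗ
        LinearMap.rTensor H (nablaRho ρ) =
        LinearMap.lTensor A (piL k H) ∘ₗ LinearMap.rTensor H (epsA ∘ₗ nablaRho ρ) := by
      rw [← LinearMap.comp_assoc, LinearMap.rTensor_comp_lTensor,
        ← LinearMap.lTensor_comp_rTensor, LinearMap.comp_assoc, ← LinearMap.rTensor_comp]
    have c4 : LinearMap.rTensor H epsA ∘ₗ LinearMap.rTensor H (nablaRho ρ) =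
        LinearMap.rTensor H (epsA ∘ₗ nablaRho ρ) := (LinearMap.rTensor_comp _ _ _).symm
    have c3' := LinearMap.congr_fun c3 w
    have c4' := LinearMap.congr_fun c4 w
    simp only [LinearMap.comp_apply] at c3' c4'
    have hNw : LinearMap.rTensor H (epsA ∘ₗ nablaRho ρ) w = nablaRho ρ y := by
      rw [hw]
      exact LinearMap.congr_fun (epsN ρ) y
    have step2 := congrArg (LinearMap.rTensor H epsA) step1
    rw [c3', c4', hNw, hy] at step2
    -- step2 : lTensor A piL y = y
    have sD := LinearMap.congr_fun (stepD hWB ρ hM hcomp hpiL) y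
    simp only [LinearMap.comp_apply] at sD
    have final : jnuAux ρ (epsA y) = y := by
      calc jnuAux ρ (epsA y) = jnuAux ρ (epsA (nablaRho ρ y)) := by rw [hy]
        _ = nablaRho ρ (LinearMap.lTensor A (piL k H) (nablaRho ρ y)) := sD
        _ = y := by rw [hy, step2, hy]
    have : iotaE ρ (jnuE ρ (epsA y)) = (e : A ⊗[k] H) := by
      rw [iota_jnuE ρ hM, final, hy']
      rfl
    exact Subtype.ext this
  refine ⟨epsA ∘ₗ iotaE ρ ∘ₗ g, ?_, ?_⟩
  · apply LinearMap.ext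
    intro x
    exact claim (g x) (hg x)
  · intro g'' hgg''
    apply LinearMap.ext
    intro x
    apply hinj
    have h1 : jnuE ρ (g'' x) = g x := LinearMap.congr_fun hgg'' x
    have h2 : jnuE ρ ((epsA ∘ₗ iotaE ρ ∘ₗ g) x) = g x := claim (g x) (hg x)
    rw [h1, h2]

end WeakCrossed
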